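/- Let Ω ⊆ ℝⁿ be open, p > 1, u : Ω → ℝ nonnegative and twice differentiable, and v : Ω → ℝ twice differentiable with v > 0 and −Δv > 0 on Ω. Define R₁(u,v) = |Δu|^p − Δ(u^p/v^{p−1}) |Δv|^{p−2} Δv. Then R₁(u,v) ≥ 0 pointwise on Ω (where u > 0). -/

import Mathlib

set_option maxHeartbeats 1000000

/-- The Laplacian of `f` at `x` as the sum of second partial derivatives. -/
noncomputable def elap {n : ℕ} (f : EuclideanSpace ℝ (Fin n) → ℝ)
    (x : EuclideanSpace ℝ (Fin n)) : ℝ :=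
  ∑ i, fderiv ℝ (fun y => fderiv ℝ f y (EuclideanSpace.single i 1)) x
    (EuclideanSpace.single i 1)

lemma young_aux {a b p : ℝ} (ha : 0 ≤ a) (hb : 0 ≤ b) (hp : 1 < p) :
    p * a * b ^ (p - 1) ≤ a ^ p + (p - 1) * b ^ p := by
  have hp0 : 0 < p := lt_trans one_pos hp
  have hp1 : 0 < p - 1 := by linarith
  have hpq := Real.HolderConjugate.conjExponent hp
  have h := Real.young_inequality_of_nonneg ha (Real.rpow_nonneg hb (p-1)) hpq
  have hq : (b ^ (p - 1)) ^ Real.conjExponent p = b ^ p := by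
    rw [← Real.rpow_mul hb]
    congr 1
    rw [Real.conjExponent]
    field_simp
  rw [hq, Real.conjExponent] at h
  have h2 : a ^ p / p + b ^ p / (p / (p - 1)) = (a ^ p + (p-1) * b ^ p) / p := by
    field_simp
  rw [h2] at h
  calc p * a * b ^ (p - 1) = p * (a * b ^ (p-1)) := by ring
    _ ≤ p * ((a ^ p + (p-1) * b ^ p) / p) := by
        exact mul_le_mul_of_nonneg_left h (le_of_lt hp0)
    _ = a ^ p + (p-1) * b ^ p := by field_simp


lemma picone_dir {n : ℕ} {Ω : Set (EuclideanSpace ℝ (Fin n))}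
    (hΩ : IsOpen Ω) {p : ℝ} (hp : 1 < p)
    {u v : EuclideanSpace ℝ (Fin n) → ℝ}
    (hu : ContDiffOn ℝ 2 u Ω) (hv : ContDiffOn ℝ 2 v Ω)
    (hv0 : ∀ y ∈ Ω, 0 < v y)
    {x : EuclideanSpace ℝ (Fin n)} (hx : x ∈ Ω) (hux : 0 < u x)
    (e : EuclideanSpace ℝ (Fin n)) :
    p * (u x ^ (p-1) * v x ^ (1-p)) * fderiv ℝ (fun y => fderiv ℝ u y e) x e
      + (1-p) * (u x ^ p * v x ^ (-p)) * fderiv ℝ (fun y => fderiv ℝ v y e) x e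
    ≤ fderiv ℝ (fun y => fderiv ℝ (fun z => u z ^ p / v z ^ (p-1)) y e) x e := by
  have hvx : 0 < v x := hv0 x hx
  -- differentiability of u, v on Ω
  have hud : ∀ y ∈ Ω, HasFDerivAt u (fderiv ℝ u y) y := fun y hy =>
    (((hu.contDiffAt (hΩ.mem_nhds hy)).differentiableAt (by norm_num))).hasFDerivAt
  have hvd : ∀ y ∈ Ω, HasFDerivAt v (fderiv ℝ v y) y := fun y hy =>
    (((hv.contDiffAt (hΩ.mem_nhds hy)).differentiableAt (by norm_num))).hasFDerivAt
  -- the open set where u > 0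
  set S : Set (EuclideanSpace ℝ (Fin n)) := Ω ∩ u ⁻¹' (Set.Ioi 0) with hS
  have hSopen : IsOpen S := hu.continuousOn.isOpen_inter_preimage hΩ isOpen_Ioi
  have hxS : x ∈ S := ⟨hx, hux⟩
  -- step 1: formula for the first derivative on S
  have g_eq : ∀ y ∈ S, fderiv ℝ (fun z => u z ^ p / v z ^ (p-1)) y e
      = p * (u y ^ (p-1) * (v y ^ (1-p) * fderiv ℝ u y e))
        + (1-p) * (u y ^ p * (v y ^ (-p) * fderiv ℝ v y e)) := by
    intro y hy
    have hvy : 0 < v y := hv0 y hy.1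
    have h1 : HasFDerivAt (fun z => u z ^ p) ((p * u y ^ (p-1)) • fderiv ℝ u y) y :=
      (hud y hy.1).rpow_const (Or.inl (ne_of_gt hy.2))
    have h2 : HasFDerivAt (fun z => v z ^ (1-p)) (((1-p) * v y ^ (1-p-1)) • fderiv ℝ v y) y :=
      (hvd y hy.1).rpow_const (Or.inl (ne_of_gt hvy))
    have hmul := h1.mul h2
    have hweq : (fun z => u z ^ p / v z ^ (p-1)) =ᶠ[nhds y] fun z => u z ^ p * v z ^ (1-p) := by
      filter_upwards [hΩ.mem_nhds hy.1] with z hz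
      have hvz : 0 < v z := hv0 z hz
      rw [show (1:ℝ) - p = -(p-1) by ring, Real.rpow_neg hvz.le, div_eq_mul_inv]
    have hw := hmul.congr_of_eventuallyEq hweq
    rw [hw.fderiv]
    simp only [ContinuousLinearMap.add_apply, ContinuousLinearMap.smul_apply, smul_eq_mul]
    rw [show (1:ℝ) - p - 1 = -p by ring]
    ring
  -- step 2: eventual equality near x
  have feq : (fun y => fderiv ℝ (fun z => u z ^ p / v z ^ (p-1)) y e)
      =ᶠ[nhds x] (fun y => p * (u y ^ (p-1) * (v y ^ (1-p) * fderiv ℝ u y e))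
        + (1-p) * (u y ^ p * (v y ^ (-p) * fderiv ℝ v y e))) :=
    Filter.eventuallyEq_of_mem (hSopen.mem_nhds hxS) g_eq
  -- step 3: differentiability of the directional derivatives at x
  have hA : DifferentiableAt ℝ (fun y => fderiv ℝ u y e) x := by
    have h2u : ContDiffAt ℝ 2 u x := hu.contDiffAt (hΩ.mem_nhds hx)
    exact ((h2u.fderiv_right (m := 1) (by norm_num)).differentiableAt (by norm_num)).clm_apply
      (differentiableAt_const e)
  have hB : DifferentiableAt ℝ (fun y => fderiv ℝ v y e) x := by
    have h2v : ContDiffAt ℝ 2 v x := hv.contDiffAt (hΩ.mem_nhds hx)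
    exact ((h2v.fderiv_right (m := 1) (by norm_num)).differentiableAt (by norm_num)).clm_apply
      (differentiableAt_const e)
  -- step 4: derivative of the RHS at x
  have hU1 : HasFDerivAt (fun y => u y ^ (p-1)) (((p-1) * u x ^ (p-1-1)) • fderiv ℝ u x) x :=
    (hud x hx).rpow_const (Or.inl (ne_of_gt hux))
  have hU2 : HasFDerivAt (fun y => u y ^ p) ((p * u x ^ (p-1)) • fderiv ℝ u x) x :=
    (hud x hx).rpow_const (Or.inl (ne_of_gt hux))
  have hV1 : HasFDerivAt (fun y => v y ^ (1-p)) (((1-p) * v x ^ (1-p-1)) • fderiv ℝ v x) x :=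
    (hvd x hx).rpow_const (Or.inl (ne_of_gt hvx))
  have hV2 : HasFDerivAt (fun y => v y ^ (-p)) (((-p) * v x ^ (-p-1)) • fderiv ℝ v x) x :=
    (hvd x hx).rpow_const (Or.inl (ne_of_gt hvx))
  have hφ : HasFDerivAt (fun y => fderiv ℝ u y e)
      (fderiv ℝ (fun y => fderiv ℝ u y e) x) x := hA.hasFDerivAt
  have hψ : HasFDerivAt (fun y => fderiv ℝ v y e)
      (fderiv ℝ (fun y => fderiv ℝ v y e) x) x := hB.hasFDerivAt
  have hG := ((hU1.mul (hV1.mul hφ)).const_mul p).add ((hU2.mul (hV2.mul hψ)).const_mul (1-p))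
  have hfd := Filter.EventuallyEq.fderiv_eq (𝕜 := ℝ) feq
  have hG' : HasFDerivAt (fun y => p * (u y ^ (p-1) * (v y ^ (1-p) * fderiv ℝ u y e))
      + (1-p) * (u y ^ p * (v y ^ (-p) * fderiv ℝ v y e))) _ x := hG
  rw [hfd, hG'.fderiv]
  simp only [ContinuousLinearMap.add_apply, ContinuousLinearMap.smul_apply, smul_eq_mul,
    ContinuousLinearMap.coe_smul', Pi.smul_apply, Pi.mul_apply]
  rw [show (1:ℝ)-p-1 = -p by ring, show (p:ℝ)-1-1 = p-2 by ring]
  set a := (fderiv ℝ u x) e with ha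
  set b := (fderiv ℝ v x) e with hb
  set A := (fderiv ℝ (fun y => (fderiv ℝ u y) e) x) e with hA'
  set B := (fderiv ℝ (fun y => (fderiv ℝ v y) e) x) e with hB'
  set U := u x with hU
  set V := v x with hV
  have key : (U^(p-1)*V^(-p)) * (U^(p-1)*V^(-p)) = (U^(p-2)*V^(1-p)) * (U^p*V^(-p-1)) := by
    rw [show (U^(p-1)*V^(-p)) * (U^(p-1)*V^(-p)) = (U^(p-1)*U^(p-1))*(V^(-p)*V^(-p)) from by ring,
      show (U^(p-2)*V^(1-p)) * (U^p*V^(-p-1)) = (U^(p-2)*U^p)*(V^(1-p)*V^(-p-1)) from by ring,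
      ← Real.rpow_add hux, ← Real.rpow_add hux, ← Real.rpow_add hvx, ← Real.rpow_add hvx]
    ring_nf
  have hc1 : 0 < U^(p-2)*V^(1-p) := by positivity
  have hc2 : 0 < U^(p-1)*V^(-p) := by positivity
  have hc3 : 0 < U^p*V^(-p-1) := by positivity
  have hpp : 0 < p * (p-1) := by nlinarith
  have hquad : 0 ≤ (U^(p-2)*V^(1-p)) * a^2 - 2 * (U^(p-1)*V^(-p)) * a * b
      + (U^p*V^(-p-1)) * b^2 := by
    nlinarith [sq_nonneg ((U^(p-2)*V^(1-p)) * a - (U^(p-1)*V^(-p)) * b), key, hc1, hc3,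
      mul_pos hc1 hc3, sq_nonneg b]
  have hfin : 0 ≤ p*(p-1)*((U^(p-2)*V^(1-p)) * a^2 - 2 * (U^(p-1)*V^(-p)) * a * b
      + (U^p*V^(-p-1)) * b^2) := mul_nonneg hpp.le hquad
  linarith [hfin]

/-- Second-order Picone inequality: with `v > 0`, `−Δv > 0`,
`R₁(u,v) = |Δu|^p − Δ(u^p/v^{p−1}) |Δv|^{p−2} Δv ≥ 0` pointwise where `u > 0`. -/
theorem second_order_picone_nonneg {n : ℕ} (Ω : Set (EuclideanSpace ℝ (Fin n)))
    (hΩ : IsOpen Ω) (p : ℝ) (hp : 1 < p)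
    (u v : EuclideanSpace ℝ (Fin n) → ℝ)
    (hu : ContDiffOn ℝ 2 u Ω) (hu0 : ∀ x ∈ Ω, 0 ≤ u x)
    (hv : ContDiffOn ℝ 2 v Ω) (hv0 : ∀ x ∈ Ω, 0 < v x)
    (hvlap : ∀ x ∈ Ω, 0 < -elap v x)
    (x : EuclideanSpace ℝ (Fin n)) (hx : x ∈ Ω) (hux : 0 < u x) :
    0 ≤ |elap u x| ^ p
        - elap (fun y => u y ^ p / v y ^ (p - 1)) x * |elap v x| ^ (p - 2) * elap v x := by
  have hvx : 0 < v x := hv0 x hx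
  have hp0 : 0 < p := lt_trans one_pos hp
  set U := u x with hU
  set V := v x with hV
  set K1 := U ^ (p-1) * V ^ (1-p) with hK1def
  set K2 := U ^ p * V ^ (-p) with hK2def
  have hK1 : 0 < K1 := by rw [hK1def]; positivity
  have hK2 : 0 < K2 := by rw [hK2def]; positivity
  set L := elap u x with hL
  set M := elap v x with hM
  set W := elap (fun y => u y ^ p / v y ^ (p - 1)) x with hW
  have hMneg : M < 0 := by have := hvlap x hx; rw [← hM] at this; linarith
  -- summed inequality
  have h1 : p * K1 * L + (1-p) * K2 * M ≤ W := by
    have hsum := Finset.sum_le_sum (s := Finset.univ)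
      (fun i _ => picone_dir hΩ hp hu hv hv0 hx hux (EuclideanSpace.single i 1))
    rw [Finset.sum_add_distrib, ← Finset.mul_sum, ← Finset.mul_sum] at hsum
    exact hsum
  -- abs values
  set m := |M| with hm'
  have hmM : m = -M := abs_of_neg hMneg
  have hm : 0 < m := by rw [hmM]; linarith
  have hmm : m ^ (p-1) = m ^ (p-2) * m := by
    rw [show p - 1 = (p-2) + 1 by ring, Real.rpow_add hm, Real.rpow_one]
  have hmp : m ^ p = m ^ (p-1) * m := by
    conv_lhs => rw [show p = (p-1) + 1 by ring]
    rw [Real.rpow_add hm, Real.rpow_one]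
  have hPM : W * m ^ (p-2) * M = -(W * m ^ (p-1)) := by
    rw [hmm, show M = -m from by linarith]; ring
  rw [hPM]
  -- reduce to 0 ≤ |L|^p + W * m^(p-1)
  have hmp1 : (0:ℝ) ≤ m ^ (p-1) := Real.rpow_nonneg hm.le _
  have h2 : (p * K1 * L + (1-p) * K2 * M) * m ^ (p-1) ≤ W * m ^ (p-1) :=
    mul_le_mul_of_nonneg_right h1 hmp1
  have h3 : (p * K1 * L + (1-p) * K2 * M) * m ^ (p-1)
      = p * K1 * L * m ^ (p-1) + (p-1) * K2 * m ^ p := by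
    rw [hmp, show M = -m from by linarith]; ring
  -- Young
  set s := U / V with hs
  have hs0 : 0 < s := div_pos hux hvx
  have hy := young_aux (abs_nonneg L) (mul_nonneg hs0.le hm.le) hp
  have hsm1 : (s * m) ^ (p-1) = K1 * m ^ (p-1) := by
    rw [Real.mul_rpow hs0.le hm.le, hs, Real.div_rpow hux.le hvx.le, hK1def,
      show (1:ℝ)-p = -(p-1) by ring, Real.rpow_neg hvx.le, div_eq_mul_inv]
  have hsmp : (s * m) ^ p = K2 * m ^ p := by
    rw [Real.mul_rpow hs0.le hm.le, hs, Real.div_rpow hux.le hvx.le, hK2def,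
      Real.rpow_neg hvx.le, div_eq_mul_inv]
  rw [hsm1, hsmp] at hy
  -- L ≥ -|L|
  have h4 : -(p * K1 * |L| * m ^ (p-1)) ≤ p * K1 * L * m ^ (p-1) := by
    have h5 := neg_abs_le L
    have h6 : 0 ≤ p * K1 * m ^ (p-1) := by positivity
    nlinarith [mul_le_mul_of_nonneg_left h5 h6]
  nlinarith [h2, h3, hy, h4]
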